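/- Let 0 ≤ α < 1 and θ ∈ ℝ with θ > −α and (α,θ) ≠ (0,0). Define p(n,k) for integers n ≥ 1 and k ∈ ℤ by p(1,1) := 1, p(1,k) := 0 for k ≠ 1, and the recursion p(n+1,k) = ((θ + α(k−1))/(θ + n))·p(n,k−1) + (1 − (θ + αk)/(θ + n))·p(n,k). Then for all 1 ≤ k ≤ n: p(n,k) = c_{k,α,θ} · (Γ(θ + αk)/Γ(θ + n)) · s_α(n,k), where c_{k,α,θ} := Π_{m=1}^{k} Γ(θ + 1 + (m−1)α)/(Γ(1−α)·Γ(θ + mα)) and s_α(n,k) is defined by s_α(0,0) := 1, s_α(n,k) := 0 for k < 0 or k > n, and s_α(n+1,k) = Γ(1−α)·s_α(n,k−1) + (n − αk)·s_α(n,k). -/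

import Mathlib

/-- `s_α`, defined by `s_α(0,0) = 1`, `s_α(n,k) = 0` for `k > n` (automatic below), and the
recursion `s_α(n+1,k) = Γ(1-α) s_α(n,k-1) + (n - αk) s_α(n,k)` (with `s_α(n,-1) := 0`). -/
noncomputable def salpha (α : ℝ) : ℕ → ℕ → ℝ
  | 0, 0 => 1
  | 0, _ + 1 => 0
  | n + 1, 0 => (n : ℝ) * salpha α n 0
  | n + 1, k + 1 =>
      Real.Gamma (1 - α) * salpha α n k + ((n : ℝ) - α * ((k : ℝ) + 1)) * salpha α n (k + 1)

/-- `c_{k,α,θ} := ∏_{m=1}^{k} Γ(θ + 1 + (m-1)α)/(Γ(1-α) Γ(θ + mα))`. -/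
noncomputable def ccoef (α θ : ℝ) (k : ℕ) : ℝ :=
  ∏ m ∈ Finset.range k,
    Real.Gamma (θ + 1 + m * α) / (Real.Gamma (1 - α) * Real.Gamma (θ + (m + 1) * α))

/-- the two-parameter `(α,θ)` Chinese restaurant recursion: `p(1,1) = 1`, `p(1,k) = 0` for
`k ≠ 1`, and `p(n+1,k) = ((θ + α(k-1))/(θ + n)) p(n,k-1) + (1 - (θ + αk)/(θ + n)) p(n,k)`. -/
noncomputable def crp2 (α θ : ℝ) : ℕ → ℤ → ℝ
  | 0, _ => 0
  | 1, k => if k = 1 then 1 else 0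
  | n + 2, k =>
      ((θ + α * ((k : ℝ) - 1)) / (θ + ((n : ℝ) + 1))) * crp2 α θ (n + 1) (k - 1) +
        (1 - (θ + α * (k : ℝ)) / (θ + ((n : ℝ) + 1))) * crp2 α θ (n + 1) k

lemma salpha_zero (α : ℝ) : ∀ n, 1 ≤ n → salpha α n 0 = 0 := by
  intro n hn
  induction n with
  | zero => omega
  | succ m ih =>
    rw [salpha]
    rcases Nat.eq_zero_or_pos m with h | h
    · subst h; norm_num
    · rw [ih h]; ring

lemma salpha_gt (α : ℝ) : ∀ n k, n < k → salpha α n k = 0 := by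
  intro n
  induction n with
  | zero =>
    intro k hk
    match k, hk with
    | k + 1, _ => rfl
  | succ m ih =>
    intro k hk
    match k, hk with
    | j + 1, hk => rw [salpha, ih j (by omega), ih (j+1) (by omega)]; ring

lemma crp2_nonpos (α θ : ℝ) : ∀ n (k : ℤ), k ≤ 0 → crp2 α θ n k = 0 := by
  intro n
  induction n with
  | zero => intro k hk; rfl
  | succ m ih =>
    intro k hk
    match m with
    | 0 => rw [crp2, if_neg (by omega)]
    | m + 1 => rw [crp2, ih (k-1) (by omega), ih k hk]; ring

lemma crp2_gt (α θ : ℝ) : ∀ (n : ℕ) (k : ℤ), (n : ℤ) < k → crp2 α θ n k = 0 := by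
  intro n
  induction n with
  | zero => intro k hk; rfl
  | succ m ih =>
    intro k hk
    match m with
    | 0 => rw [crp2, if_neg (by omega)]
    | m + 1 => rw [crp2, ih (k-1) (by omega), ih k (by omega)]; ring

set_option maxHeartbeats 1000000 in
/-- for `0 ≤ α < 1`, `θ > -α`, `(α,θ) ≠ (0,0)` and `1 ≤ k ≤ n`,
`p(n,k) = c_{k,α,θ} (Γ(θ + αk)/Γ(θ + n)) s_α(n,k)`. -/
theorem statement14 (α θ : ℝ) (h0 : 0 ≤ α) (h1 : α < 1) (hθ : -α < θ)
    (hne : ¬(α = 0 ∧ θ = 0)) :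
    ∀ n k : ℕ, 1 ≤ k → k ≤ n →
      crp2 α θ n (k : ℤ) =
        ccoef α θ k * (Real.Gamma (θ + α * k) / Real.Gamma (θ + n)) * salpha α n k := by
  have hα : (0:ℝ) < 1 - α := by linarith
  have hθα : (0:ℝ) < θ + α := by linarith
  have hΓ1 : Real.Gamma (1 - α) ≠ 0 := (Real.Gamma_pos_of_pos hα).ne'
  have hΓk : ∀ x : ℝ, 1 ≤ x → Real.Gamma (θ + α * x) ≠ 0 := by
    intro x hx
    have : (0:ℝ) < θ + α * x := by nlinarith
    exact (Real.Gamma_pos_of_pos this).ne'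
  have hpos : ∀ x : ℝ, 1 ≤ x → 0 < θ + x := by intro x hx; linarith
  have hΓn : ∀ x : ℝ, 1 ≤ x → Real.Gamma (θ + x) ≠ 0 := fun x hx =>
    (Real.Gamma_pos_of_pos (hpos x hx)).ne'
  intro n
  induction n with
  | zero => intro k hk hkn; omega
  | succ m ih =>
    intro k hk hkn
    cases m with
    | zero =>
      have hk1 : k = 1 := le_antisymm hkn hk
      subst hk1
      have h1' : crp2 α θ 1 (1:ℤ) = 1 := by rw [crp2, if_pos rfl]
      have hs : salpha α 1 1 = Real.Gamma (1 - α) := by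
        rw [salpha]
        show Real.Gamma (1-α) * salpha α 0 0 + _ * salpha α 0 1 = _
        rw [show salpha α 0 0 = 1 from rfl, show salpha α 0 1 = 0 from rfl]
        ring
      have hc : ccoef α θ 1 = Real.Gamma (θ + 1) / (Real.Gamma (1-α) * Real.Gamma (θ + α)) := by
        rw [ccoef, Finset.prod_range_one]
        norm_num
      norm_num only
      rw [h1', hs, hc]
      push_cast
      rw [show θ + α * 1 = θ + α by ring]
      field_simp [hΓn 1 le_rfl]
    | succ m' =>
      have hm1 : (1:ℝ) ≤ (m':ℝ) + 1 := by
        have : (0:ℝ) ≤ (m':ℝ) := Nat.cast_nonneg m'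
        linarith
      have hMpos : (0:ℝ) < θ + ((m':ℝ) + 1) := hpos _ hm1
      have hΓM : Real.Gamma (θ + ((m':ℝ) + 1)) ≠ 0 := hΓn _ hm1
      have hGsucc : Real.Gamma (θ + ((m':ℝ) + 2)) =
          (θ + ((m':ℝ) + 1)) * Real.Gamma (θ + ((m':ℝ) + 1)) := by
        rw [show θ + ((m':ℝ) + 2) = (θ + ((m':ℝ) + 1)) + 1 by ring,
          Real.Gamma_add_one hMpos.ne']
      match k, hk, hkn with
      | 1, _, _ =>
        have hB := ih 1 le_rfl (by omega)
        have hs : salpha α (m' + 2) 1 = Real.Gamma (1 - α) * salpha α (m' + 1) 0 +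
            (((m' + 1 : ℕ) : ℝ) - α * (((0:ℕ):ℝ) + 1)) * salpha α (m' + 1) 1 := by
          show salpha α ((m' + 1) + 1) (0 + 1) = _
          conv_lhs => rw [salpha]
        rw [show ((m' + 1 + 1 : ℕ)) = m' + 2 from rfl, crp2,
          show ((1:ℕ):ℤ) - 1 = 0 from rfl, crp2_nonpos α θ (m' + 1) 0 le_rfl,
          hs, salpha_zero α (m' + 1) (by omega)]
        push_cast at hB ⊢
        rw [hB, hGsucc]
        field_simp
        ring
      | (j + 2), _, hkn =>
        have hj0 : (0:ℝ) ≤ (j:ℝ) := Nat.cast_nonneg j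
        have hjα : (0:ℝ) < θ + α * ((j:ℝ) + 1) := by nlinarith
        have hA := ih (j + 1) (by omega) (by omega)
        have hB : crp2 α θ (m' + 1) ((j + 2 : ℕ) : ℤ) =
            ccoef α θ (j + 2) *
              (Real.Gamma (θ + α * ((j + 2 : ℕ) : ℝ)) / Real.Gamma (θ + ((m' + 1 : ℕ) : ℝ))) *
              salpha α (m' + 1) (j + 2) := by
          rcases Nat.lt_or_ge (m' + 1) (j + 2) with h | h
          · rw [crp2_gt α θ (m' + 1) _ (by exact_mod_cast h),
              salpha_gt α (m' + 1) (j + 2) h]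
            ring
          · exact ih (j + 2) (by omega) h
        have hs : salpha α (m' + 2) (j + 2) =
            Real.Gamma (1 - α) * salpha α (m' + 1) (j + 1) +
            (((m' + 1 : ℕ) : ℝ) - α * (((j + 1 : ℕ) : ℝ) + 1)) * salpha α (m' + 1) (j + 2) := by
          show salpha α ((m' + 1) + 1) ((j + 1) + 1) = _
          conv_lhs => rw [salpha]
        have hc : ccoef α θ (j + 2) = ccoef α θ (j + 1) *
            (Real.Gamma (θ + α * ((j:ℝ) + 1) + 1) /
              (Real.Gamma (1 - α) * Real.Gamma (θ + α * ((j:ℝ) + 2)))) := by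
          rw [ccoef, Finset.prod_range_succ, ← ccoef]
          rw [show θ + 1 + ((j + 1 : ℕ) : ℝ) * α = θ + α * ((j:ℝ) + 1) + 1 by push_cast; ring,
            show θ + (((j + 1 : ℕ) : ℝ) + 1) * α = θ + α * ((j:ℝ) + 2) by push_cast; ring]
        have hg : Real.Gamma (θ + α * ((j:ℝ) + 1) + 1) =
            (θ + α * ((j:ℝ) + 1)) * Real.Gamma (θ + α * ((j:ℝ) + 1)) :=
          Real.Gamma_add_one hjα.ne'
        have hΓj1 : Real.Gamma (θ + α * ((j:ℝ) + 1)) ≠ 0 := (Real.Gamma_pos_of_pos hjα).ne'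
        have hΓj2 : Real.Gamma (θ + α * ((j:ℝ) + 2)) ≠ 0 := by
          have : (0:ℝ) < θ + α * ((j:ℝ) + 2) := by nlinarith
          exact (Real.Gamma_pos_of_pos this).ne'
        rw [hc, hg] at hB
        rw [show ((m' + 1 + 1 : ℕ)) = m' + 2 from rfl, crp2,
          show ((j + 2 : ℕ) : ℤ) - 1 = ((j + 1 : ℕ) : ℤ) by push_cast; ring,
          hs, hc, hg]
        push_cast at hA hB ⊢
        rw [hA, hB, hGsucc]
        field_simp
        ring
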